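/- Let λ, λ' ∈ Q_I^{++} and let w, w' ∈ W be minimal length representatives of their cosets in W/W_I (i.e. w, w' ∈ W^I). If ⟨wλ, w'λ'⟩ = ⟨λ, λ'⟩, then w = w'. -/

import Mathlib

/-!
Combinatorial setup: a finite crystallographic root system `Φ` spanning a Euclidean
space `V`, with a chosen system of simple roots `α 1, …, α r`, simple coroots
`αᵛ i = (2/⟪α i, α i⟫) • α i`, Weyl group `W` (the subgroup of linear isometries
generated by the reflections in the simple roots), dominant elements, and the notion
of `μ` being subdominant to a dominant `λ` (the dominant representative `μ⁺` of the
orbit `W μ` satisfies `λ - μ⁺ ∈ Σᵢ ℝ≥0 αᵛ i`).  `Q_I^+` is encoded via the pairings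
with the simple coroots: `λ ∈ Q_I^+` iff `⟪λ, αᵛ j⟫ ∈ ℤ≥0` for all `j` and
`⟪λ, αᵛ j⟫ = 0` for `j ∈ I` (equivalently `λ = Σ_{i ∉ I} n_i ω_i`, `n_i ∈ ℤ≥0`,
where the `ω_i` are the fundamental weights, the dual basis to the simple coroots).
-/

open scoped RealInnerProductSpace

/-- A finite crystallographic root system spanning `V`, together with a choice of
system of simple roots `α 1, …, α r`. -/
structure SimpleSystem (V : Type*) [NormedAddCommGroup V] [InnerProductSpace ℝ V]
    (r : ℕ) where
  /-- the (finite) set of roots -/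
  Φ : Finset V
  /-- the simple roots -/
  α : Fin r → V
  α_mem : ∀ i, α i ∈ Φ
  ne_zero : ∀ β ∈ Φ, β ≠ 0
  span_eq_top : Submodule.span ℝ (Φ : Set V) = ⊤
  indep : LinearIndependent ℝ α
  /-- every root is a nonnegative or a nonpositive combination of the simple roots -/
  base : ∀ β ∈ Φ, (∃ c : Fin r → ℝ, (∀ i, 0 ≤ c i) ∧ β = ∑ i, c i • α i) ∨
      (∃ c : Fin r → ℝ, (∀ i, 0 ≤ c i) ∧ β = - ∑ i, c i • α i)
  /-- the crystallographic condition -/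
  crystallographic : ∀ β ∈ Φ, ∀ γ ∈ Φ, ∃ n : ℤ, 2 * ⟪β, γ⟫ / ⟪γ, γ⟫ = (n : ℝ)
  /-- `Φ` is stable under the reflections `s_β` -/
  reflect_mem : ∀ β ∈ Φ, ∀ γ ∈ Φ, γ - (2 * ⟪γ, β⟫ / ⟪β, β⟫) • β ∈ Φ

namespace SimpleSystem

variable {V : Type*} [NormedAddCommGroup V] [InnerProductSpace ℝ V]
  [FiniteDimensional ℝ V] {r : ℕ}

/-- The simple coroot `αᵛ i = 2 α i / ⟪α i, α i⟫`. -/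
noncomputable def coroot (S : SimpleSystem V r) (i : Fin r) : V :=
  (2 / ⟪S.α i, S.α i⟫) • S.α i

/-- The simple reflection `s_i`: the orthogonal reflection in the hyperplane
orthogonal to the simple root `α i`. -/
noncomputable def simpleReflection (S : SimpleSystem V r) (i : Fin r) : V ≃ₗᵢ[ℝ] V :=
  Submodule.reflection (ℝ ∙ S.α i)ᗮ

/-- The Weyl group `W`, as a group of linear isometries of `V`. -/
def weylGroup (S : SimpleSystem V r) : Subgroup (V ≃ₗᵢ[ℝ] V) :=
  Subgroup.closure (Set.range S.simpleReflection)

/-- `ξ ∈ V` is dominant if `⟪ξ, αᵛ i⟫ ≥ 0` for all `i`. -/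
def IsDominant (S : SimpleSystem V r) (ξ : V) : Prop :=
  ∀ i, 0 ≤ ⟪ξ, S.coroot i⟫

/-- `μ` is subdominant to (the dominant element) `lam` if the dominant element `μ⁺`
of the orbit `W μ` satisfies `lam - μ⁺ ∈ Σᵢ ℝ≥0 • (αᵛ i)`. -/
def IsSubdominant (S : SimpleSystem V r) (lam μ : V) : Prop :=
  ∃ w ∈ S.weylGroup, S.IsDominant (w μ) ∧
    ∃ c : Fin r → ℝ, (∀ i, 0 ≤ c i) ∧ lam - w μ = ∑ i, c i • S.coroot i

/-- Membership in `Q_I^+ = {Σ_{i ∈ Iᶜ} n_i ω_i : n_i ∈ ℤ≥0}`, characterized by the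
pairings with the simple coroots: all of them are nonnegative integers, and those
indexed by `I` vanish. -/
def MemQplus (S : SimpleSystem V r) (I : Finset (Fin r)) (lam : V) : Prop :=
  ∀ j, (∃ n : ℕ, ⟪lam, S.coroot j⟫ = (n : ℝ)) ∧ (j ∈ I → ⟪lam, S.coroot j⟫ = 0)

/-- Membership in `Q_I^{++} = {Σ_{i ∈ Iᶜ} n_i ω_i : n_i ∈ ℤ>0}`. -/
def MemQplusplus (S : SimpleSystem V r) (I : Finset (Fin r)) (lam : V) : Prop :=
  ∀ j, (j ∉ I → ∃ n : ℕ, 0 < n ∧ ⟪lam, S.coroot j⟫ = (n : ℝ)) ∧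
    (j ∈ I → ⟪lam, S.coroot j⟫ = 0)

/-- `β` is a positive root: a root which is a nonnegative combination of the
simple roots. -/
def IsPositiveRoot (S : SimpleSystem V r) (β : V) : Prop :=
  β ∈ S.Φ ∧ ∃ c : Fin r → ℝ, (∀ i, 0 ≤ c i) ∧ β = ∑ i, c i • S.α i

end SimpleSystem

set_option linter.unusedSectionVars false

section Aux

variable {V : Type*} [NormedAddCommGroup V] [InnerProductSpace ℝ V] [FiniteDimensional ℝ V]

theorem reflection_hyperplane_apply (v x : V) :
    Submodule.reflection (ℝ ∙ v)ᗮ x = x - (2 * ⟪x, v⟫ / ⟪v, v⟫) • v := by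
  rw [Submodule.reflection_apply, Submodule.starProjection_orthogonal_val, Submodule.starProjection_singleton]
  simp only [RCLike.ofReal_real_eq_id, id_eq]
  have h2 : ((‖v‖ : ℝ) ^ 2) = ⟪v, v⟫ := by
    rw [← real_inner_self_eq_norm_sq]
  have h3 : (2 : ℕ) • (x - (⟪v, x⟫ / (‖v‖ : ℝ) ^ 2) • v)
      = (2 : ℝ) • (x - (⟪v, x⟫ / (‖v‖ : ℝ) ^ 2) • v) := by
    rw [← Nat.cast_smul_eq_nsmul ℝ]; norm_num
  rw [h3, h2, smul_sub, smul_smul, real_inner_comm v x]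
  rw [mul_div_assoc, two_smul]
  abel

end Aux


namespace SimpleSystem

variable {V : Type*} [NormedAddCommGroup V] [InnerProductSpace ℝ V]
  [FiniteDimensional ℝ V] {r : ℕ} (S : SimpleSystem V r)

lemma alpha_ne_zero (i : Fin r) : S.α i ≠ 0 := S.ne_zero _ (S.α_mem i)

lemma inner_alpha_pos (i : Fin r) : 0 < ⟪S.α i, S.α i⟫ :=
  real_inner_self_nonneg.lt_of_ne fun h => S.alpha_ne_zero i (inner_self_eq_zero.1 h.symm)

lemma inner_alpha_ne (i : Fin r) : ⟪S.α i, S.α i⟫ ≠ 0 := (S.inner_alpha_pos i).ne'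

lemma span_alpha : Submodule.span ℝ (Set.range S.α) = ⊤ := by
  rw [← top_le_iff, ← S.span_eq_top, Submodule.span_le]
  intro β hβ
  rcases S.base β hβ with ⟨c, _, rfl⟩ | ⟨c, _, rfl⟩
  · exact Submodule.sum_mem _ fun i _ =>
      Submodule.smul_mem _ _ (Submodule.subset_span ⟨i, rfl⟩)
  · exact Submodule.neg_mem _ <| Submodule.sum_mem _ fun i _ =>
      Submodule.smul_mem _ _ (Submodule.subset_span ⟨i, rfl⟩)

/-- The simple roots as a basis. -/
noncomputable def basis : Module.Basis (Fin r) ℝ V :=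
  Module.Basis.mk S.indep (by rw [S.span_alpha])

lemma basis_apply (i : Fin r) : S.basis i = S.α i := Module.Basis.mk_apply _ _ _

lemma repr_sum (c : Fin r → ℝ) (j : Fin r) :
    S.basis.repr (∑ i, c i • S.α i) j = c j := by
  have : (∑ i, c i • S.α i) = ∑ i, c i • S.basis i := by
    simp [basis_apply]
  rw [this, Module.Basis.repr_sum_self]

lemma repr_alpha (i j : Fin r) :
    S.basis.repr (S.α i) j = if i = j then 1 else 0 := by
  rw [← basis_apply, Module.Basis.repr_self, Finsupp.single_apply]

lemma eq_sum_repr (x : V) : x = ∑ i, S.basis.repr x i • S.α i := by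
  conv_lhs => rw [← S.basis.sum_repr x]
  simp [basis_apply]

lemma eq_zero_of_repr_eq_zero {x : V} (h : ∀ j, S.basis.repr x j = 0) : x = 0 := by
  rw [S.eq_sum_repr x]
  simp [h]

lemma s_apply (i : Fin r) (x : V) :
    S.simpleReflection i x = x - (2 * ⟪x, S.α i⟫ / ⟪S.α i, S.α i⟫) • S.α i :=
  reflection_hyperplane_apply _ _

lemma s_s (i : Fin r) (x : V) :
    S.simpleReflection i (S.simpleReflection i x) = x := by
  simp [simpleReflection, Submodule.reflection_reflection]

lemma mul_apply (f g : V ≃ₗᵢ[ℝ] V) (x : V) : (f * g) x = f (g x) := rfl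

lemma s_mul_s (i : Fin r) : S.simpleReflection i * S.simpleReflection i = 1 := by
  ext x
  exact S.s_s i x

lemma s_inv (i : Fin r) : (S.simpleReflection i)⁻¹ = S.simpleReflection i :=
  inv_eq_of_mul_eq_one_left (S.s_mul_s i)

lemma s_alpha_self (i : Fin r) : S.simpleReflection i (S.α i) = -S.α i := by
  rw [s_apply, mul_div_assoc, div_self (S.inner_alpha_ne i)]
  module

lemma s_apply_of_inner_eq_zero (i : Fin r) {x : V} (h : ⟪x, S.α i⟫ = 0) :
    S.simpleReflection i x = x := by
  rw [s_apply, h]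
  simp

/-- word product -/
noncomputable def wp (l : List (Fin r)) : V ≃ₗᵢ[ℝ] V :=
  (l.map S.simpleReflection).prod

@[simp] lemma wp_nil : S.wp [] = 1 := rfl

lemma wp_cons (i : Fin r) (l : List (Fin r)) :
    S.wp (i :: l) = S.simpleReflection i * S.wp l := by
  simp [wp]

lemma wp_append (l₁ l₂ : List (Fin r)) : S.wp (l₁ ++ l₂) = S.wp l₁ * S.wp l₂ := by
  simp [wp]

lemma wp_singleton (i : Fin r) : S.wp [i] = S.simpleReflection i := by
  simp [wp]

lemma wp_reverse (l : List (Fin r)) : S.wp l.reverse = (S.wp l)⁻¹ := by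
  induction l with
  | nil => simp
  | cons i t ih =>
      rw [List.reverse_cons, wp_append, ih, wp_singleton, wp_cons, mul_inv_rev, s_inv]

lemma wp_mem (l : List (Fin r)) : S.wp l ∈ S.weylGroup := by
  induction l with
  | nil => exact Subgroup.one_mem _
  | cons i t ih =>
      rw [wp_cons]
      exact Subgroup.mul_mem _ (Subgroup.subset_closure ⟨i, rfl⟩) ih

lemma exists_word {w : V ≃ₗᵢ[ℝ] V} (hw : w ∈ S.weylGroup) : ∃ l, S.wp l = w := by
  induction hw using Subgroup.closure_induction with
  | mem x hx => rcases hx with ⟨i, rfl⟩; exact ⟨[i], S.wp_singleton i⟩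
  | one => exact ⟨[], rfl⟩
  | mul x y _ _ hx hy =>
      rcases hx with ⟨l₁, rfl⟩; rcases hy with ⟨l₂, rfl⟩
      exact ⟨l₁ ++ l₂, S.wp_append l₁ l₂⟩
  | inv x _ hx =>
      rcases hx with ⟨l, rfl⟩
      exact ⟨l.reverse, S.wp_reverse l⟩


/-- positive element: a root with all simple-root coordinates nonnegative. -/
def Pos (β : V) : Prop := β ∈ S.Φ ∧ ∀ j, 0 ≤ S.basis.repr β j

/-- negative element -/
def Neg (β : V) : Prop := β ∈ S.Φ ∧ ∀ j, S.basis.repr β j ≤ 0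

lemma pos_or_neg {β : V} (hβ : β ∈ S.Φ) : S.Pos β ∨ S.Neg β := by
  rcases S.base β hβ with ⟨c, hc, h⟩ | ⟨c, hc, h⟩
  · left
    refine ⟨hβ, fun j => ?_⟩
    rw [h, S.repr_sum]
    exact hc j
  · right
    refine ⟨hβ, fun j => ?_⟩
    have : β = ∑ i, (-c i) • S.α i := by
      rw [h]; simp [Finset.sum_neg_distrib]
    rw [this, S.repr_sum]
    simpa using hc j

lemma not_pos_neg {β : V} (hp : S.Pos β) (hn : S.Neg β) : False := by
  have : β = 0 := S.eq_zero_of_repr_eq_zero fun j => le_antisymm (hn.2 j) (hp.2 j)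
  exact S.ne_zero β hp.1 this

lemma pos_alpha (i : Fin r) : S.Pos (S.α i) := by
  refine ⟨S.α_mem i, fun j => ?_⟩
  rw [S.repr_alpha]
  split <;> norm_num

lemma neg_of_neg_pos {β : V} (hβ : -β ∈ S.Φ) (hp : S.Pos β) : S.Neg (-β) := by
  refine ⟨hβ, fun j => ?_⟩
  rw [map_neg]
  simpa using hp.2 j

lemma pos_of_neg_neg {β : V} (hβ : -β ∈ S.Φ) (hp : S.Neg β) : S.Pos (-β) := by
  refine ⟨hβ, fun j => ?_⟩
  rw [map_neg]
  simpa using hp.2 j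

lemma s_root (i : Fin r) {β : V} (hβ : β ∈ S.Φ) : S.simpleReflection i β ∈ S.Φ := by
  rw [s_apply]
  exact S.reflect_mem _ (S.α_mem i) _ hβ

lemma wp_root (l : List (Fin r)) {β : V} (hβ : β ∈ S.Φ) : S.wp l β ∈ S.Φ := by
  induction l with
  | nil => simpa using hβ
  | cons i t ih =>
      rw [wp_cons, mul_apply]
      exact S.s_root i ih

lemma root_ne_zero_map (u : V ≃ₗᵢ[ℝ] V) (i : Fin r) : u (S.α i) ≠ 0 := by
  simp [S.alpha_ne_zero i]

/-- key lemma: a positive root sent to a negative root by `s i` is a multiple of `α i`. -/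
lemma pos_reflect_neg {β : V} {i : Fin r} (hp : S.Pos β)
    (hn : S.Neg (S.simpleReflection i β)) : ∃ c : ℝ, β = c • S.α i := by
  refine ⟨S.basis.repr β i, ?_⟩
  have hco : ∀ j, j ≠ i → S.basis.repr β j = 0 := by
    intro j hj
    have h1 : S.basis.repr (S.simpleReflection i β) j = S.basis.repr β j := by
      rw [s_apply, map_sub, map_smul]
      have : S.basis.repr (S.α i) j = 0 := by
        rw [S.repr_alpha]
        simp [Ne.symm hj]
      simp [this]
    have h2 := hn.2 j
    rw [h1] at h2
    exact le_antisymm h2 (hp.2 j)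
  conv_lhs => rw [S.eq_sum_repr β]
  exact Finset.sum_eq_single i (fun j _ hj => by rw [hco j hj, zero_smul]) (by simp)

lemma conj_eq {u : V ≃ₗᵢ[ℝ] V} {j i : Fin r} {c : ℝ}
    (h : u (S.α j) = c • S.α i) :
    u * S.simpleReflection j = S.simpleReflection i * u := by
  have hc : c ≠ 0 := by
    rintro rfl
    exact S.root_ne_zero_map u j (by simpa using h)
  ext x
  rw [mul_apply, mul_apply, s_apply, s_apply, map_sub, map_smul, h]
  congr 1
  have e1 : ⟪x, S.α j⟫ = c * ⟪u x, S.α i⟫ := by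
    calc ⟪x, S.α j⟫ = ⟪u x, u (S.α j)⟫ := (u.inner_map_map x (S.α j)).symm
    _ = c * ⟪u x, S.α i⟫ := by rw [h, real_inner_smul_right]
  have e2 : ⟪S.α j, S.α j⟫ = c ^ 2 * ⟪S.α i, S.α i⟫ := by
    calc ⟪S.α j, S.α j⟫ = ⟪u (S.α j), u (S.α j)⟫ := (u.inner_map_map _ _).symm
    _ = c ^ 2 * ⟪S.α i, S.α i⟫ := by
        rw [h, real_inner_smul_right, real_inner_smul_left]; ring
  rw [e1, e2, smul_smul]
  congr 1
  field_simp [hc, S.inner_alpha_ne i]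

/-- Exchange lemma. -/
lemma exch : ∀ (l : List (Fin r)) (j : Fin r), S.Neg (S.wp l (S.α j)) →
    ∃ l', l'.length + 1 = l.length ∧ (∀ i ∈ l', i ∈ l) ∧
      S.wp l * S.simpleReflection j = S.wp l' := by
  intro l
  induction l with
  | nil =>
      intro j hn
      exact absurd hn (fun hn => S.not_pos_neg (S.pos_alpha j) (by simpa using hn))
  | cons i t ih =>
      intro j hn
      rcases S.pos_or_neg (S.wp_root t (S.α_mem j)) with hp | hg
      · -- wp t (α j) positive, becomes negative after s i: multiple of α i
        have hni : S.Neg (S.simpleReflection i (S.wp t (S.α j))) := by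
          rw [wp_cons, mul_apply] at hn
          exact hn
        obtain ⟨c, hc⟩ := S.pos_reflect_neg hp hni
        have hconj := S.conj_eq (u := S.wp t) (c := c) hc
        refine ⟨t, by simp, fun a ha => List.mem_cons_of_mem _ ha, ?_⟩
        rw [wp_cons, mul_assoc, hconj, ← mul_assoc, s_mul_s, one_mul]
      · obtain ⟨t', hlen, hsub, heq⟩ := ih j hg
        refine ⟨i :: t', by simpa using hlen, ?_, ?_⟩
        · intro a ha
          rcases List.mem_cons.1 ha with rfl | ha
          · exact List.mem_cons_self
          · exact List.mem_cons_of_mem _ (hsub a ha)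
        · rw [wp_cons, mul_assoc, heq, wp_cons]

/-- either some simple root goes negative, or the word can be shortened by two. -/
lemma shorten_or_neg (l : List (Fin r)) (hl : l ≠ []) :
    (∃ l', l'.length + 2 = l.length ∧ (∀ i ∈ l', i ∈ l) ∧ S.wp l' = S.wp l) ∨
    (∃ j ∈ l, S.Neg (S.wp l (S.α j))) := by
  obtain ⟨t, j, rfl⟩ : ∃ t j, l = t ++ [j] := by
    rcases List.eq_nil_or_concat l with rfl | ⟨t, j, rfl⟩
    · exact absurd rfl hl
    · exact ⟨t, j, List.concat_eq_append⟩
  have hjl : j ∈ t ++ [j] := by simp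
  rcases S.pos_or_neg (S.wp_root t (S.α_mem j)) with hp | hg
  · right
    refine ⟨j, hjl, ?_⟩
    have : S.wp (t ++ [j]) (S.α j) = -(S.wp t (S.α j)) := by
      rw [wp_append, wp_singleton, mul_apply, s_alpha_self, map_neg]
    rw [this]
    refine S.neg_of_neg_pos ?_ hp
    rw [← this]
    exact S.wp_root _ (S.α_mem j)
  · left
    obtain ⟨t', hlen, hsub, heq⟩ := S.exch t j hg
    refine ⟨t', by have := hlen; simp only [List.length_append, List.length_cons,
      List.length_nil]; omega, fun a ha => by simp [hsub a ha], ?_⟩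
    rw [← heq, wp_append, wp_singleton]


lemma inner_coroot (x : V) (j : Fin r) :
    ⟪x, S.coroot j⟫ = 2 * ⟪x, S.α j⟫ / ⟪S.α j, S.α j⟫ := by
  rw [coroot, real_inner_smul_right]
  ring

lemma s_apply' (j : Fin r) (x : V) :
    S.simpleReflection j x = x - ⟪x, S.coroot j⟫ • S.α j := by
  rw [s_apply, inner_coroot]

lemma inner_alpha_nonneg_of_dominant {lam : V} (hdom : S.IsDominant lam) (i : Fin r) :
    0 ≤ ⟪lam, S.α i⟫ := by
  have h := hdom i
  rw [inner_coroot] at h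
  have hp := S.inner_alpha_pos i
  have h2 : 0 ≤ 2 * ⟪lam, S.α i⟫ := by
    have h3 := mul_nonneg h hp.le
    rwa [div_mul_cancel₀ _ (S.inner_alpha_ne i)] at h3
  linarith

lemma inner_alpha_nonneg_of_dominant' {lam : V} (hdom : S.IsDominant lam) (i : Fin r) :
    0 ≤ ⟪lam, S.α i⟫ := S.inner_alpha_nonneg_of_dominant hdom i

/-- subdominance: `lam - (wp l) lam` is a nonnegative combination of simple roots. -/
lemma dom_sub {lam : V} (hdom : S.IsDominant lam) :
    ∀ n (l : List (Fin r)), l.length ≤ n →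
    ∃ c : Fin r → ℝ, (∀ i, 0 ≤ c i) ∧ lam - S.wp l lam = ∑ i, c i • S.α i := by
  intro n
  induction n with
  | zero =>
      intro l hl
      have : l = [] := List.eq_nil_of_length_eq_zero (Nat.le_zero.1 hl)
      subst this
      exact ⟨0, fun i => le_rfl, by simp⟩
  | succ n ih =>
      intro l hl
      by_cases h0 : l = []
      · subst h0
        exact ⟨0, fun i => le_rfl, by simp⟩
      rcases S.shorten_or_neg l h0 with ⟨l', hlen, _, heq⟩ | ⟨j, hj, hneg⟩
      · obtain ⟨c, hc, hsum⟩ := ih l' (by omega)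
        exact ⟨c, hc, by rwa [heq] at hsum⟩
      · obtain ⟨l'', hlen2, _, heq2⟩ := S.exch l j hneg
        have hwl : S.wp l = S.wp l'' * S.simpleReflection j := by
          rw [← heq2, mul_assoc, s_mul_s, mul_one]
        obtain ⟨c, hc, hsum⟩ := ih l'' (by omega)
        have hδ : S.Pos (S.wp l'' (S.α j)) := by
          have h1 : S.wp l'' (S.α j) = -(S.wp l (S.α j)) := by
            rw [← heq2, mul_apply, s_alpha_self, map_neg]
          rw [h1]
          exact S.pos_of_neg_neg (by rw [← h1]; exact S.wp_root _ (S.α_mem j)) hneg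
        set t := ⟪lam, S.coroot j⟫ with ht
        have ht0 : 0 ≤ t := hdom j
        have key : lam - S.wp l lam = (lam - S.wp l'' lam) + t • (S.wp l'' (S.α j)) := by
          rw [hwl, mul_apply, s_apply', map_sub, map_smul]
          abel
        refine ⟨fun i => c i + t * S.basis.repr (S.wp l'' (S.α j)) i,
          fun i => add_nonneg (hc i) (mul_nonneg ht0 (hδ.2 i)), ?_⟩
        rw [key, hsum]
        conv_lhs => rw [S.eq_sum_repr (S.wp l'' (S.α j))]
        rw [Finset.smul_sum, ← Finset.sum_add_distrib]
        refine Finset.sum_congr rfl fun i _ => ?_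
        rw [smul_smul, ← add_smul]

/-- Chevalley-type lemma: an element fixing a dominant `lam` is a product of
simple reflections orthogonal to `lam`. -/
lemma stab {lam : V} (hdom : S.IsDominant lam) :
    ∀ n (l : List (Fin r)), l.length ≤ n → S.wp l lam = lam →
    ∃ m : List (Fin r), (∀ i ∈ m, ⟪lam, S.coroot i⟫ = 0) ∧ S.wp m = S.wp l := by
  intro n
  induction n with
  | zero =>
      intro l hl _
      have : l = [] := List.eq_nil_of_length_eq_zero (Nat.le_zero.1 hl)
      subst this
      exact ⟨[], by simp, rfl⟩
  | succ n ih =>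
      intro l hl hfix
      by_cases h0 : l = []
      · subst h0
        exact ⟨[], by simp, rfl⟩
      rcases S.shorten_or_neg l h0 with ⟨l', hlen, _, heq⟩ | ⟨j, hj, hneg⟩
      · obtain ⟨m, hm, hmeq⟩ := ih l' (by omega) (by rw [heq]; exact hfix)
        exact ⟨m, hm, by rw [hmeq, heq]⟩
      · have hz : ⟪lam, S.α j⟫ = 0 := by
          have e1 : ⟪lam, S.wp l (S.α j)⟫ = ⟪lam, S.α j⟫ := by
            conv_lhs => rw [← hfix]
            exact (S.wp l).inner_map_map lam (S.α j)
          have e2 : ⟪lam, S.wp l (S.α j)⟫ ≤ 0 := by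
            conv_lhs => rw [S.eq_sum_repr (S.wp l (S.α j))]
            rw [inner_sum]
            refine Finset.sum_nonpos fun i _ => ?_
            rw [real_inner_smul_right]
            exact mul_nonpos_of_nonpos_of_nonneg (hneg.2 i)
              (S.inner_alpha_nonneg_of_dominant hdom i)
          have e3 : 0 ≤ ⟪lam, S.α j⟫ := S.inner_alpha_nonneg_of_dominant hdom j
          linarith [e1 ▸ e2]

        have hsfix : S.simpleReflection j lam = lam := S.s_apply_of_inner_eq_zero j hz
        obtain ⟨l'', hlen2, _, heq2⟩ := S.exch l j hneg
        have hfix2 : S.wp l'' lam = lam := by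
          rw [← heq2, mul_apply, hsfix, hfix]
        obtain ⟨m', hm', hm'eq⟩ := ih l'' (by omega) hfix2
        refine ⟨m' ++ [j], ?_, ?_⟩
        · intro i hi
          rcases List.mem_append.1 hi with hi | hi
          · exact hm' i hi
          · have : i = j := by simpa using hi
            subst this
            rw [inner_coroot, hz]
            simp
        · rw [wp_append, wp_singleton, hm'eq, ← heq2, mul_assoc, s_mul_s, mul_one]

/-- span of the simple roots indexed by `I` -/
def spanI (I : Finset (Fin r)) : Submodule ℝ V :=
  Submodule.span ℝ (S.α '' (I : Set (Fin r)))

lemma alpha_mem_spanI {I : Finset (Fin r)} {i : Fin r} (hi : i ∈ I) :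
    S.α i ∈ S.spanI I :=
  Submodule.subset_span ⟨i, by simpa using hi, rfl⟩

lemma s_mem_spanI {I : Finset (Fin r)} {i : Fin r} (hi : i ∈ I) {x : V}
    (hx : x ∈ S.spanI I) : S.simpleReflection i x ∈ S.spanI I := by
  rw [s_apply]
  exact Submodule.sub_mem _ hx (Submodule.smul_mem _ _ (S.alpha_mem_spanI hi))

lemma wp_mem_spanI {I : Finset (Fin r)} {l : List (Fin r)} (hl : ∀ i ∈ l, i ∈ I)
    {x : V} (hx : x ∈ S.spanI I) : S.wp l x ∈ S.spanI I := by
  induction l with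
  | nil => simpa using hx
  | cons i t ih =>
      rw [wp_cons, mul_apply]
      exact S.s_mem_spanI (hl i (List.mem_cons_self))
        (ih fun a ha => hl a (List.mem_cons_of_mem _ ha))

lemma repr_eq_zero_of_mem_spanI {I : Finset (Fin r)} {x : V} (hx : x ∈ S.spanI I)
    {j : Fin r} (hj : j ∉ I) : S.basis.repr x j = 0 := by
  induction hx using Submodule.span_induction with
  | mem y hy =>
      obtain ⟨i, hi, rfl⟩ := hy
      rw [S.repr_alpha]
      have : i ≠ j := fun h => hj (h ▸ hi)
      simp [this]
  | zero => simp
  | add y z _ _ hy hz => rw [map_add]; simp [hy, hz]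
  | smul a y _ hy => rw [map_smul]; simp [hy]

/-- uniqueness of minimal coset representatives. -/
lemma minrep {I : Finset (Fin r)} {w w' : V ≃ₗᵢ[ℝ] V}
    (hPw : ∀ i ∈ I, S.Pos (w (S.α i))) (hPw' : ∀ i ∈ I, S.Pos (w' (S.α i))) :
    ∀ n (m : List (Fin r)), m.length ≤ n → (∀ i ∈ m, i ∈ I) →
      w * S.wp m = w' → w = w' := by
  intro n
  induction n with
  | zero =>
      intro m hm _ hprod
      have : m = [] := List.eq_nil_of_length_eq_zero (Nat.le_zero.1 hm)
      subst this
      simpa using hprod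
  | succ n ih =>
      intro m hm hmI hprod
      by_cases h0 : m = []
      · subst h0
        simpa using hprod
      rcases S.shorten_or_neg m h0 with ⟨m', hlen, hsub, heq⟩ | ⟨j, hj, hneg⟩
      · exact ih m' (by omega) (fun i hi => hmI i (hsub i hi)) (by rw [heq, hprod])
      · exfalso
        have hjI : j ∈ I := hmI j hj
        set γ := S.wp m (S.α j) with hγ
        have hγspan : γ ∈ S.spanI I := S.wp_mem_spanI hmI (S.alpha_mem_spanI hjI)
        have hwγ : w' (S.α j) = w γ := by
          rw [← hprod, mul_apply]
        have hrepr : ∀ k, S.basis.repr (w γ) k ≤ 0 := by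
          intro k
          have hγsum : γ = ∑ i, S.basis.repr γ i • S.α i := S.eq_sum_repr γ
          have : w γ = ∑ i, S.basis.repr γ i • w (S.α i) := by
            conv_lhs => rw [hγsum]
            rw [map_sum]
            simp [map_smul]
          rw [this]
          simp only [map_sum, map_smul, Finsupp.coe_finset_sum, Finset.sum_apply,
            Finsupp.coe_smul, Pi.smul_apply, smul_eq_mul]
          refine Finset.sum_nonpos fun i _ => ?_
          by_cases hiI : i ∈ I
          · exact mul_nonpos_of_nonpos_of_nonneg (hneg.2 i) ((hPw i hiI).2 k)
          · rw [S.repr_eq_zero_of_mem_spanI hγspan hiI]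
            simp
        have hrepr' : ∀ k, 0 ≤ S.basis.repr (w' (S.α j)) k := (hPw' j hjI).2
        have : w' (S.α j) = 0 := by
          apply S.eq_zero_of_repr_eq_zero
          intro k
          have := hrepr k
          rw [← hwγ] at this
          exact le_antisymm this (hrepr' k)
        exact S.root_ne_zero_map w' j this


lemma pos_of_isPositiveRoot {β : V} (h : S.IsPositiveRoot β) : S.Pos β := by
  obtain ⟨hβ, c, hc, rfl⟩ := h
  exact ⟨hβ, fun j => by rw [S.repr_sum]; exact hc j⟩

lemma dominant_of_memQpp {I : Finset (Fin r)} {lam : V} (h : S.MemQplusplus I lam) :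
    S.IsDominant lam := by
  intro i
  by_cases hi : i ∈ I
  · rw [(h i).2 hi]
  · obtain ⟨n, hn, he⟩ := (h i).1 hi
    rw [he]
    positivity

lemma inner_alpha_pos_of_memQpp {I : Finset (Fin r)} {lam : V} (h : S.MemQplusplus I lam)
    {i : Fin r} (hi : i ∉ I) : 0 < ⟪lam, S.α i⟫ := by
  obtain ⟨n, hn, he⟩ := (h i).1 hi
  rw [inner_coroot] at he
  have hp := S.inner_alpha_pos i
  have : 2 * ⟪lam, S.α i⟫ = n * ⟪S.α i, S.α i⟫ := by
    field_simp at he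
    linarith [he]
  nlinarith [mul_pos (show (0:ℝ) < n by exact_mod_cast hn) hp]

lemma inner_alpha_zero_of_memQpp {I : Finset (Fin r)} {lam : V} (h : S.MemQplusplus I lam)
    {i : Fin r} (hi : i ∈ I) : ⟪lam, S.α i⟫ = 0 := by
  have he := (h i).2 hi
  rw [inner_coroot] at he
  have := S.inner_alpha_ne i
  field_simp at he
  linarith


end SimpleSystem


/-- If `λ, λ' ∈ Q_I^{++}` and `w, w'` are minimal length representatives of their
cosets in `W/W_I` (i.e. they send each `α i`, `i ∈ I`, to a positive root), then
`⟪w λ, w' λ'⟫ = ⟪λ, λ'⟫` forces `w = w'`. -/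
theorem minimal_rep_eq_of_inner_eq {V : Type*} [NormedAddCommGroup V]
    [InnerProductSpace ℝ V] [FiniteDimensional ℝ V] {r : ℕ}
    (S : SimpleSystem V r) (I : Finset (Fin r)) {lam lam' : V}
    (hlam : S.MemQplusplus I lam) (hlam' : S.MemQplusplus I lam')
    {w w' : V ≃ₗᵢ[ℝ] V} (hw : w ∈ S.weylGroup) (hw' : w' ∈ S.weylGroup)
    (hwI : ∀ i ∈ I, S.IsPositiveRoot (w (S.α i)))
    (hwI' : ∀ i ∈ I, S.IsPositiveRoot (w' (S.α i)))
    (heq : ⟪w lam, w' lam'⟫ = ⟪lam, lam'⟫) :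
    w = w' := by
  classical
  obtain ⟨lw, rfl⟩ := S.exists_word hw
  obtain ⟨lw', rfl⟩ := S.exists_word hw'
  set w := S.wp lw
  set w' := S.wp lw'
  set lu : List (Fin r) := lw.reverse ++ lw' with hlu
  have hu : S.wp lu = w⁻¹ * w' := by
    rw [hlu, SimpleSystem.wp_append, SimpleSystem.wp_reverse]
  set u := w⁻¹ * w' with hudef
  have hwu : w * u = w' := by
    rw [hudef, ← mul_assoc, mul_inv_cancel, one_mul]
  have hdom : S.IsDominant lam := S.dominant_of_memQpp hlam
  have hdom' : S.IsDominant lam' := S.dominant_of_memQpp hlam'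
  -- subdominance
  obtain ⟨c, hc, hsum⟩ := S.dom_sub hdom' lu.length lu le_rfl
  rw [hu] at hsum
  -- the equality of inner products
  have hinner : ⟪lam, lam' - u lam'⟫ = 0 := by
    have h1 : ⟪lam, u lam'⟫ = ⟪w lam, w' lam'⟫ := by
      rw [← hwu]
      calc ⟪lam, u lam'⟫ = ⟪w lam, w (u lam')⟫ := (w.inner_map_map _ _).symm
      _ = ⟪w lam, (w * u) lam'⟫ := rfl
    rw [inner_sub_right, h1, heq]
    ring
  have hterms : ∀ i, c i * ⟪lam, S.α i⟫ = 0 := by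
    have hs : ∑ i, c i * ⟪lam, S.α i⟫ = 0 := by
      rw [← hinner, hsum, inner_sum]
      refine Finset.sum_congr rfl fun i _ => ?_
      rw [real_inner_smul_right]
    intro i
    have := (Finset.sum_eq_zero_iff_of_nonneg (fun i _ =>
      mul_nonneg (hc i) (S.inner_alpha_nonneg_of_dominant hdom i))).1 hs i (Finset.mem_univ i)
    exact this
  have hcI : ∀ i, i ∉ I → c i = 0 := by
    intro i hi
    have := hterms i
    have hpos := S.inner_alpha_pos_of_memQpp hlam hi
    rcases mul_eq_zero.1 this with h | h
    · exact h
    · exact absurd h hpos.ne'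
  -- ⟪lam', v⟫ = 0
  have hlv : ⟪lam', lam' - u lam'⟫ = 0 := by
    rw [hsum, inner_sum]
    refine Finset.sum_eq_zero fun i _ => ?_
    rw [real_inner_smul_right]
    by_cases hi : i ∈ I
    · rw [S.inner_alpha_zero_of_memQpp hlam' hi, mul_zero]
    · rw [hcI i hi, zero_mul]
  -- v = 0
  have hvzero : lam' - u lam' = 0 := by
    rw [← inner_self_eq_zero (𝕜 := ℝ)]
    have hnorm : ⟪u lam', u lam'⟫ = ⟪lam', lam'⟫ := u.inner_map_map _ _
    have hsymm : ⟪u lam', lam'⟫ = ⟪lam', u lam'⟫ := real_inner_comm _ _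
    have hexp : ⟪lam' - u lam', lam' - u lam'⟫
        = 2 * ⟪lam', lam' - u lam'⟫ := by
      rw [inner_sub_right, inner_sub_left, inner_sub_left, inner_sub_right, hnorm, hsymm]
      ring
    rw [hexp, hlv, mul_zero]
  have hfix : u lam' = lam' := by
    have := sub_eq_zero.1 hvzero
    exact this.symm
  -- Chevalley
  obtain ⟨m, hm0, hmeq⟩ := S.stab hdom' lu.length lu le_rfl (by rw [hu, hfix])
  have hmI : ∀ i ∈ m, i ∈ I := by
    intro i hi
    by_contra hni
    obtain ⟨n, hn, he⟩ := (hlam' i).1 hni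
    rw [hm0 i hi] at he
    have : (0:ℝ) < n := by exact_mod_cast hn
    linarith [he ▸ this]
  -- minimal representative uniqueness
  exact S.minrep (fun i hi => S.pos_of_isPositiveRoot (hwI i hi))
    (fun i hi => S.pos_of_isPositiveRoot (hwI' i hi)) m.length m le_rfl hmI
    (by rw [hmeq, hu, hwu])
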